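/- Let Z₁, Z₂ ⊂ R^n be sets with B_{1/3}(0) ⊂ Z_i ⊂ B_2(0), and let Y be a metric space with Cδ-isometries h₁ : Y → Z₁ and h₂ : Y → Z₂ satisfying h₁(x₀) = h₂(x₀) = 0 for some x₀ ∈ Y. Then there exists an orthogonal linear map U : R^n → R^n and a constant C' = C'(n) such that |U(h₁(x)) − h₂(x)| < C'δ for all x ∈ Y. -/

import Mathlib

open Metric

open Finset
open InnerProductSpace
local notation "⟪" x ", " y "⟫" => @inner ℝ _ _ x y

instance finWFLT (n : ℕ) : WellFoundedLT (Fin n) := IsWellOrder.toIsWellFounded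

noncomputable abbrev E (n : ℕ) := EuclideanSpace ℝ (Fin n)

set_option maxHeartbeats 1000000 in
lemma gs_stable (n : ℕ) (w : Fin n → E n) (ε : ℝ) (hε : 0 < ε)
    (hsmall : ε * (12 * 6 ^ n) ≤ 1)
    (hG : ∀ i j, |⟪w i, w j⟫ - (if i = j then (1:ℝ) else 0)| ≤ ε) :
    ∃ u : OrthonormalBasis (Fin n) ℝ (E n), ∀ i, ‖u i - w i‖ ≤ 12 * 6 ^ n * ε := by
  have h6n : (1:ℝ) ≤ 6 ^ n := one_le_pow₀ (by norm_num)
  have hε1 : ε ≤ 1/12 := by nlinarith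
  have h6 : ∀ i : Fin n, (6:ℝ) ^ (i:ℕ) ≤ 6 ^ n := fun i =>
    pow_le_pow_right₀ (by norm_num) (le_of_lt i.2)
  have hwnorm2 : ∀ i, ‖w i‖ ≤ 2 := by
    intro i
    have h := hG i i
    simp only [if_pos rfl, if_true, real_inner_self_eq_norm_sq] at h
    have h1 : ‖w i‖ ^ 2 ≤ 1 + ε := by cases abs_le.1 h; linarith
    nlinarith [norm_nonneg (w i)]
  have hwnorm1 : ∀ i, |‖w i‖ - 1| ≤ ε := by
    intro i
    have h := hG i i
    simp only [if_pos rfl, if_true, real_inner_self_eq_norm_sq] at h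
    have hn : (0:ℝ) ≤ ‖w i‖ := norm_nonneg _
    cases abs_le.1 h with
    | intro h1 h2 =>
      rw [abs_le]
      constructor <;> nlinarith
  have key : ∀ m : ℕ, ∀ i : Fin n, (i:ℕ) = m →
      ‖gramSchmidtNormed ℝ w i - w i‖ ≤ 12 * 6 ^ (i:ℕ) * ε ∧
        1/2 ≤ ‖gramSchmidt ℝ w i‖ := by
    intro m
    induction m using Nat.strong_induction_on with
    | _ m ih =>
      intro i him
      have IH : ∀ j : Fin n, j < i →
          ‖gramSchmidtNormed ℝ w j - w j‖ ≤ 12 * 6 ^ (j:ℕ) * ε ∧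
            1/2 ≤ ‖gramSchmidt ℝ w j‖ := by
        intro j hj
        have hj' : (j:ℕ) < m := him ▸ (Fin.lt_def.mp hj)
        exact ih _ hj' j rfl
      have hinner : ∀ j : Fin n, j < i →
          |⟪gramSchmidtNormed ℝ w j, w i⟫| ≤ 25 * 6 ^ (j:ℕ) * ε := by
        intro j hj
        have h1 : |⟪w j, w i⟫| ≤ ε := by
          have := hG j i
          rw [if_neg (Fin.ne_of_lt hj)] at this
          simpa using this
        have h2 : |⟪gramSchmidtNormed ℝ w j - w j, w i⟫| ≤ 12 * 6 ^ (j:ℕ) * ε * 2 := by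
          calc |⟪gramSchmidtNormed ℝ w j - w j, w i⟫|
              ≤ ‖gramSchmidtNormed ℝ w j - w j‖ * ‖w i‖ := abs_real_inner_le_norm _ _
            _ ≤ 12 * 6 ^ (j:ℕ) * ε * 2 := by
                apply mul_le_mul (IH j hj).1 (hwnorm2 i) (norm_nonneg _)
                positivity
        have heq : ⟪gramSchmidtNormed ℝ w j, w i⟫
            = ⟪w j, w i⟫ + ⟪gramSchmidtNormed ℝ w j - w j, w i⟫ := by
          rw [inner_sub_left]; ring
        have h6j : (1:ℝ) ≤ 6 ^ (j:ℕ) := one_le_pow₀ (by norm_num)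
        rw [heq]
        calc |⟪w j, w i⟫ + ⟪gramSchmidtNormed ℝ w j - w j, w i⟫|
            ≤ |⟪w j, w i⟫| + |⟪gramSchmidtNormed ℝ w j - w j, w i⟫| := abs_add_le _ _
          _ ≤ ε + 12 * 6 ^ (j:ℕ) * ε * 2 := add_le_add h1 h2
          _ ≤ 25 * 6 ^ (j:ℕ) * ε := by nlinarith
      have hterm : ∀ j : Fin n, j < i →
          ‖(⟪gramSchmidt ℝ w j, w i⟫ / (‖gramSchmidt ℝ w j‖:ℝ) ^ 2) • gramSchmidt ℝ w j‖
            ≤ 25 * 6 ^ (j:ℕ) * ε := by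
        intro j hj
        have hgj : (0:ℝ) < ‖gramSchmidt ℝ w j‖ := lt_of_lt_of_le (by norm_num) (IH j hj).2
        have hval : ‖(⟪gramSchmidt ℝ w j, w i⟫ / (‖gramSchmidt ℝ w j‖:ℝ) ^ 2) • gramSchmidt ℝ w j‖
            = |⟪gramSchmidt ℝ w j, w i⟫| / ‖gramSchmidt ℝ w j‖ := by
          rw [norm_smul]
          rw [Real.norm_eq_abs, abs_div,
            abs_of_nonneg (by positivity : (0:ℝ) ≤ ‖gramSchmidt ℝ w j‖ ^ 2)]
          field_simp
        have hrel : |⟪gramSchmidt ℝ w j, w i⟫| / ‖gramSchmidt ℝ w j‖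
            = |⟪gramSchmidtNormed ℝ w j, w i⟫| := by
          have hin : ⟪gramSchmidtNormed ℝ w j, w i⟫
              = (‖gramSchmidt ℝ w j‖)⁻¹ * ⟪gramSchmidt ℝ w j, w i⟫ := by
            simp [gramSchmidtNormed, real_inner_smul_left, RCLike.ofReal_real_eq_id,
              Finset.mul_sum, mul_assoc]
          rw [hin, abs_mul, abs_of_nonneg (by positivity : (0:ℝ) ≤ (‖gramSchmidt ℝ w j‖)⁻¹)]
          field_simp
        rw [hval, hrel]
        exact hinner j hj
      have hA : ‖gramSchmidt ℝ w i - w i‖ ≤ 5 * 6 ^ (i:ℕ) * ε := by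
        have hdef := gramSchmidt_def'' ℝ w i
        have heq : gramSchmidt ℝ w i - w i
            = -(∑ j ∈ Finset.Iio i,
                (⟪gramSchmidt ℝ w j, w i⟫ / (‖gramSchmidt ℝ w j‖:ℝ) ^ 2) • gramSchmidt ℝ w j) := by
          conv_lhs => rw [hdef]
          abel
        rw [heq, norm_neg]
        calc ‖∑ j ∈ Finset.Iio i,
              (⟪gramSchmidt ℝ w j, w i⟫ / (‖gramSchmidt ℝ w j‖:ℝ) ^ 2) • gramSchmidt ℝ w j‖
            ≤ ∑ j ∈ Finset.Iio i,
              ‖(⟪gramSchmidt ℝ w j, w i⟫ / (‖gramSchmidt ℝ w j‖:ℝ) ^ 2) • gramSchmidt ℝ w j‖ :=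
            norm_sum_le _ _
          _ ≤ ∑ j ∈ Finset.Iio i, 25 * 6 ^ (j:ℕ) * ε := by
              apply Finset.sum_le_sum
              intro j hj
              exact hterm j (Finset.mem_Iio.1 hj)
          _ ≤ 5 * 6 ^ (i:ℕ) * ε := by
              have hs : ∑ j ∈ Finset.Iio i, (6:ℝ) ^ (j:ℕ)
                  = ∑ k ∈ Finset.range (i:ℕ), (6:ℝ) ^ k := by
                rw [← Nat.Iio_eq_range, ← Fin.map_valEmbedding_Iio, Finset.sum_map]
                rfl
              have hgeom : ∑ k ∈ Finset.range (i:ℕ), (6:ℝ) ^ k = (6 ^ (i:ℕ) - 1) / (6 - 1) :=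
                geom_sum_eq (by norm_num) _
              rw [← Finset.sum_mul, ← Finset.mul_sum, hs, hgeom]
              have h6i : (1:ℝ) ≤ 6 ^ (i:ℕ) := one_le_pow₀ (by norm_num)
              nlinarith
      have hglow : 1/2 ≤ ‖gramSchmidt ℝ w i‖ := by
        have h1 := hwnorm1 i
        have h2 : ‖w i‖ - ‖gramSchmidt ℝ w i - w i‖ ≤ ‖gramSchmidt ℝ w i‖ := by
          have h3 := norm_sub_norm_le (w i) (gramSchmidt ℝ w i)
          have h4 : ‖w i - gramSchmidt ℝ w i‖ = ‖gramSchmidt ℝ w i - w i‖ := by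
            rw [← norm_neg (w i - gramSchmidt ℝ w i), neg_sub]
          linarith
        have hfac : 6 * 6 ^ (i:ℕ) * ε ≤ 1/2 := by
          have := h6 i
          nlinarith
        have h6i : (1:ℝ) ≤ 6 ^ (i:ℕ) := one_le_pow₀ (by norm_num)
        have habs := abs_le.1 h1
        nlinarith
      constructor
      · have hgnval : gramSchmidtNormed ℝ w i - gramSchmidt ℝ w i
            = ((‖gramSchmidt ℝ w i‖)⁻¹ - 1) • gramSchmidt ℝ w i := by
          rw [sub_smul, one_smul]
          congr 1
        have hgpos : (0:ℝ) < ‖gramSchmidt ℝ w i‖ := lt_of_lt_of_le (by norm_num) hglow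
        have h1 : ‖gramSchmidtNormed ℝ w i - gramSchmidt ℝ w i‖ = |1 - ‖gramSchmidt ℝ w i‖| := by
          rw [hgnval, norm_smul, Real.norm_eq_abs]
          rw [show (‖gramSchmidt ℝ w i‖)⁻¹ - 1
              = (1 - ‖gramSchmidt ℝ w i‖) / ‖gramSchmidt ℝ w i‖ by field_simp]
          rw [abs_div, abs_of_nonneg (norm_nonneg (gramSchmidt ℝ w i))]
          field_simp
        have h2 : |1 - ‖gramSchmidt ℝ w i‖| ≤ |1 - ‖w i‖| + ‖gramSchmidt ℝ w i - w i‖ := by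
          have ha : |1 - ‖gramSchmidt ℝ w i‖|
              ≤ |1 - ‖w i‖| + |‖w i‖ - ‖gramSchmidt ℝ w i‖| := by
            have := abs_add_le (1 - ‖w i‖) (‖w i‖ - ‖gramSchmidt ℝ w i‖)
            simpa using this
          have hb : |‖w i‖ - ‖gramSchmidt ℝ w i‖| ≤ ‖gramSchmidt ℝ w i - w i‖ := by
            rw [← norm_neg (gramSchmidt ℝ w i - w i), neg_sub]
            exact abs_norm_sub_norm_le _ _
          linarith
        have h3 : ‖gramSchmidtNormed ℝ w i - w i‖
            ≤ ‖gramSchmidtNormed ℝ w i - gramSchmidt ℝ w i‖ + ‖gramSchmidt ℝ w i - w i‖ := by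
          have := norm_add_le (gramSchmidtNormed ℝ w i - gramSchmidt ℝ w i)
            (gramSchmidt ℝ w i - w i)
          simpa using this
        have h4 : |1 - ‖w i‖| ≤ ε := by rw [abs_sub_comm]; exact hwnorm1 i
        have h6i : (1:ℝ) ≤ 6 ^ (i:ℕ) := one_le_pow₀ (by norm_num)
        rw [h1] at h3
        nlinarith
      · exact hglow
  have hne : ∀ i, gramSchmidtNormed ℝ w i ≠ 0 := by
    intro i
    have h2 := (key _ i rfl).2
    have hgne : gramSchmidt ℝ w i ≠ 0 := by
      intro h0; rw [h0, norm_zero] at h2; norm_num at h2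
    have hval : gramSchmidtNormed ℝ w i = (‖gramSchmidt ℝ w i‖)⁻¹ • gramSchmidt ℝ w i := by
      simp [gramSchmidtNormed, RCLike.ofReal_real_eq_id]
    rw [hval]
    exact smul_ne_zero (inv_ne_zero (norm_ne_zero_iff.2 hgne)) hgne
  have hcard : Module.finrank ℝ (E n) = Fintype.card (Fin n) := by
    simp [finrank_euclideanSpace_fin]
  refine ⟨gramSchmidtOrthonormalBasis hcard w, ?_⟩
  intro i
  rw [gramSchmidtOrthonormalBasis_apply hcard (hne i)]
  have h6i := h6 i
  have hk := (key _ i rfl).1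
  nlinarith

lemma sq_diff_bound {a b M e : ℝ} (ha : 0 ≤ a) (hb : 0 ≤ b) (haM : a ≤ M) (hbM : b ≤ M)
    (h : |a - b| ≤ e) : |a^2 - b^2| ≤ 2 * M * e := by
  have he : 0 ≤ e := le_trans (abs_nonneg _) h
  have hid : a^2 - b^2 = (a - b) * (a + b) := by ring
  rw [hid, abs_mul, abs_of_nonneg (by linarith : (0:ℝ) ≤ a + b)]
  nlinarith [abs_nonneg (a - b)]

set_option maxHeartbeats 1600000 in
/-- **Two pointed almost-isometric images of the same space differ by an orthogonal map.**
For every `n` there is a constant `C' = C'(n) > 0 with the following property.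
Let `Z₁, Z₂ ⊆ ℝⁿ` satisfy `B_{1/3}(0) ⊆ Zᵢ ⊆ B₂(0)`, let `Y` be a metric space with
`δ`-isometries `h₁ : Y → Z₁` and `h₂ : Y → Z₂` (images are `δ`-nets and distances are
distorted by less than `δ`) such that `h₁(x₀) = h₂(x₀) = 0` for some `x₀ ∈ Y`.  Then there
is an orthogonal linear map `U : ℝⁿ → ℝⁿ` with `|U(h₁ x) − h₂ x| < C'·δ` for all `x ∈ Y`. -/
theorem stmt12 (n : ℕ) : ∃ C' : ℝ, 0 < C' ∧
    ∀ (Y : Type) [MetricSpace Y] (δ : ℝ), 0 < δ →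
    ∀ (Z₁ Z₂ : Set (EuclideanSpace ℝ (Fin n))),
      Metric.closedBall 0 (1 / 3) ⊆ Z₁ → Z₁ ⊆ Metric.closedBall 0 2 →
      Metric.closedBall 0 (1 / 3) ⊆ Z₂ → Z₂ ⊆ Metric.closedBall 0 2 →
    ∀ (h₁ h₂ : Y → EuclideanSpace ℝ (Fin n)) (x₀ : Y),
      (∀ x : Y, h₁ x ∈ Z₁) → (∀ x : Y, h₂ x ∈ Z₂) →
      (∀ x y : Y, |dist (h₁ x) (h₁ y) - dist x y| < δ) →
      (∀ x y : Y, |dist (h₂ x) (h₂ y) - dist x y| < δ) →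
      (∀ z ∈ Z₁, ∃ x : Y, dist (h₁ x) z < δ) →
      (∀ z ∈ Z₂, ∃ x : Y, dist (h₂ x) z < δ) →
      h₁ x₀ = 0 → h₂ x₀ = 0 →
      ∃ U : EuclideanSpace ℝ (Fin n) ≃ₗᵢ[ℝ] EuclideanSpace ℝ (Fin n),
        ∀ x : Y, dist (U (h₁ x)) (h₂ x) < C' * δ := by
  have h6n : (1:ℝ) ≤ 6 ^ n := one_le_pow₀ (by norm_num)
  have hsq : (0:ℝ) ≤ Real.sqrt n := Real.sqrt_nonneg _
  refine ⟨Real.sqrt n * (72 + 7296 * 6 ^ n) + 14592 * 6 ^ n + 1, by positivity, ?_⟩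
  intro Y _ δ hδ Z₁ Z₂ hB1 hZ1 hB2 hZ2 h₁ h₂ x₀ hh1 hh2 hd1 hd2 hnet1 hnet2 h10 h20
  have hn1 : ∀ x, ‖h₁ x‖ ≤ 2 := by
    intro x
    have := hZ1 (hh1 x); rwa [mem_closedBall, dist_zero_right] at this
  have hn2 : ∀ x, ‖h₂ x‖ ≤ 2 := by
    intro x
    have := hZ2 (hh2 x); rwa [mem_closedBall, dist_zero_right] at this
  by_cases hsmall : δ * (3648 * 6 ^ n) ≤ 1
  case neg =>
    refine ⟨LinearIsometryEquiv.refl ℝ _, ?_⟩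
    intro x
    simp only [LinearIsometryEquiv.coe_refl, id_eq]
    have hb : dist (h₁ x) (h₂ x) ≤ 4 := by
      have := dist_triangle (h₁ x) 0 (h₂ x)
      rw [dist_zero_right, dist_comm (0 : EuclideanSpace ℝ (Fin n)), dist_zero_right] at this
      linarith [hn1 x, hn2 x]
    push_neg at hsmall
    nlinarith [mul_pos hδ (by positivity : (0:ℝ) < Real.sqrt n * (72 + 7296 * 6 ^ n) + 1)]
  case pos =>
  -- norm comparison
  have hnc : ∀ x : Y, |‖h₁ x‖ - ‖h₂ x‖| < 2 * δ := by
    intro x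
    have a := hd1 x x₀
    have b := hd2 x x₀
    rw [h10, dist_zero_right] at a
    rw [h20, dist_zero_right] at b
    cases abs_lt.1 a with
    | intro a1 a2 =>
      cases abs_lt.1 b with
      | intro b1 b2 =>
        rw [abs_lt]; constructor <;> linarith
  -- distance comparison
  have hdc : ∀ x y : Y, |dist (h₁ x) (h₁ y) - dist (h₂ x) (h₂ y)| < 2 * δ := by
    intro x y
    have a := hd1 x y
    have b := hd2 x y
    cases abs_lt.1 a with
    | intro a1 a2 =>
      cases abs_lt.1 b with
      | intro b1 b2 =>
        rw [abs_lt]; constructor <;> linarith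
  -- inner product comparison
  have hic : ∀ x y : Y, |⟪h₁ x, h₁ y⟫ - ⟪h₂ x, h₂ y⟫| ≤ 16 * δ := by
    intro x y
    have e1 : ⟪h₁ x, h₁ y⟫ = (‖h₁ x‖^2 + ‖h₁ y‖^2 - dist (h₁ x) (h₁ y)^2) / 2 := by
      rw [dist_eq_norm]
      have := norm_sub_sq_real (h₁ x) (h₁ y)
      linarith
    have e2 : ⟪h₂ x, h₂ y⟫ = (‖h₂ x‖^2 + ‖h₂ y‖^2 - dist (h₂ x) (h₂ y)^2) / 2 := by
      rw [dist_eq_norm]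
      have := norm_sub_sq_real (h₂ x) (h₂ y)
      linarith
    have s1 : |‖h₁ x‖^2 - ‖h₂ x‖^2| ≤ 2 * 2 * (2*δ) :=
      sq_diff_bound (norm_nonneg _) (norm_nonneg _) (hn1 x) (hn2 x) (le_of_lt (hnc x))
    have s2 : |‖h₁ y‖^2 - ‖h₂ y‖^2| ≤ 2 * 2 * (2*δ) :=
      sq_diff_bound (norm_nonneg _) (norm_nonneg _) (hn1 y) (hn2 y) (le_of_lt (hnc y))
    have hD1 : dist (h₁ x) (h₁ y) ≤ 4 := by
      have := dist_triangle (h₁ x) 0 (h₁ y)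
      rw [dist_zero_right, dist_comm (0 : EuclideanSpace ℝ (Fin n)), dist_zero_right] at this
      linarith [hn1 x, hn1 y]
    have hD2 : dist (h₂ x) (h₂ y) ≤ 4 := by
      have := dist_triangle (h₂ x) 0 (h₂ y)
      rw [dist_zero_right, dist_comm (0 : EuclideanSpace ℝ (Fin n)), dist_zero_right] at this
      linarith [hn2 x, hn2 y]
    have s3 : |dist (h₁ x) (h₁ y)^2 - dist (h₂ x) (h₂ y)^2| ≤ 2 * 4 * (2*δ) :=
      sq_diff_bound dist_nonneg dist_nonneg hD1 hD2 (le_of_lt (hdc x y))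
    rw [e1, e2]
    cases abs_le.1 s1 with
    | intro p1 p2 =>
      cases abs_le.1 s2 with
      | intro q1 q2 =>
        cases abs_le.1 s3 with
        | intro r1 r2 =>
          rw [abs_le]; constructor <;> linarith
  -- marked points
  set z : Fin n → EuclideanSpace ℝ (Fin n) :=
    fun i => (4:ℝ)⁻¹ • EuclideanSpace.single i (1:ℝ) with hz
  have hzn : ∀ i, ‖z i‖ = 4⁻¹ := by
    intro i
    rw [hz]
    simp [norm_smul, EuclideanSpace.norm_single]
  have hzmem : ∀ i, z i ∈ Metric.closedBall (0 : EuclideanSpace ℝ (Fin n)) (1/3) := by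
    intro i
    rw [mem_closedBall, dist_zero_right, hzn i]
    norm_num
  have hex : ∀ i : Fin n, ∃ x : Y, dist (h₁ x) (z i) < δ := fun i => hnet1 (z i) (hB1 (hzmem i))
  choose y hy using hex
  have ha : ∀ i, ‖h₁ (y i) - z i‖ < δ := by
    intro i; rw [← dist_eq_norm]; exact hy i
  have hz_inner : ∀ i j, ⟪z i, z j⟫ = (16:ℝ)⁻¹ * (if i = j then 1 else 0) := by
    intro i j
    rw [hz]
    simp only [real_inner_smul_left, real_inner_smul_right, EuclideanSpace.inner_single_left]
    simp [EuclideanSpace.single_apply, eq_comm]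
    split <;> norm_num
  have hza : ∀ i j, |⟪h₁ (y i), h₁ (y j)⟫ - 16⁻¹ * (if i = j then 1 else 0)| ≤ 3 * δ := by
    intro i j
    have hsplit : ⟪h₁ (y i), h₁ (y j)⟫ - ⟪z i, z j⟫
        = ⟪h₁ (y i) - z i, h₁ (y j)⟫ + ⟪z i, h₁ (y j) - z j⟫ := by
      rw [inner_sub_left, inner_sub_right]; ring
    have b1 : |⟪h₁ (y i) - z i, h₁ (y j)⟫| ≤ δ * 2 := by
      calc |⟪h₁ (y i) - z i, h₁ (y j)⟫| ≤ ‖h₁ (y i) - z i‖ * ‖h₁ (y j)‖ :=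
          abs_real_inner_le_norm _ _
        _ ≤ δ * 2 := mul_le_mul (le_of_lt (ha i)) (hn1 (y j)) (norm_nonneg _) (le_of_lt hδ)
    have b2 : |⟪z i, h₁ (y j) - z j⟫| ≤ 4⁻¹ * δ := by
      calc |⟪z i, h₁ (y j) - z j⟫| ≤ ‖z i‖ * ‖h₁ (y j) - z j‖ := abs_real_inner_le_norm _ _
        _ ≤ 4⁻¹ * δ := by
            rw [hzn i]
            exact mul_le_mul_of_nonneg_left (le_of_lt (ha j)) (by norm_num)
    have : |⟪h₁ (y i), h₁ (y j)⟫ - ⟪z i, z j⟫| ≤ δ * 2 + 4⁻¹ * δ := by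
      rw [hsplit]
      exact le_trans (abs_add_le _ _) (add_le_add b1 b2)
    rw [hz_inner i j] at this
    calc |⟪h₁ (y i), h₁ (y j)⟫ - 16⁻¹ * (if i = j then 1 else 0)|
        ≤ δ * 2 + 4⁻¹ * δ := this
      _ ≤ 3 * δ := by linarith
  -- the almost-orthonormal frame
  set w : Fin n → EuclideanSpace ℝ (Fin n) := fun i => (4:ℝ) • h₂ (y i) with hwdef
  have hw : ∀ i j, |⟪w i, w j⟫ - (if i = j then (1:ℝ) else 0)| ≤ 304 * δ := by
    intro i j
    have h16 : ⟪w i, w j⟫ = 16 * ⟪h₂ (y i), h₂ (y j)⟫ := by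
      rw [hwdef]
      simp only [real_inner_smul_left, real_inner_smul_right]
      ring
    have hics := hic (y i) (y j)
    have hzas := hza i j
    rw [h16]
    have : (16:ℝ) * ⟪h₂ (y i), h₂ (y j)⟫ - (if i = j then (1:ℝ) else 0)
        = 16 * (⟪h₂ (y i), h₂ (y j)⟫ - ⟪h₁ (y i), h₁ (y j)⟫)
          + 16 * (⟪h₁ (y i), h₁ (y j)⟫ - 16⁻¹ * (if i = j then 1 else 0)) := by
      ring
    rw [this]
    have c1 : |(16:ℝ) * (⟪h₂ (y i), h₂ (y j)⟫ - ⟪h₁ (y i), h₁ (y j)⟫)| ≤ 16 * (16 * δ) := by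
      rw [abs_mul, abs_of_nonneg (by norm_num : (0:ℝ) ≤ 16)]
      rw [abs_sub_comm] at hics
      exact mul_le_mul_of_nonneg_left hics (by norm_num)
    have c2 : |(16:ℝ) * (⟪h₁ (y i), h₁ (y j)⟫ - 16⁻¹ * (if i = j then 1 else 0))|
        ≤ 16 * (3 * δ) := by
      rw [abs_mul, abs_of_nonneg (by norm_num : (0:ℝ) ≤ 16)]
      exact mul_le_mul_of_nonneg_left hzas (by norm_num)
    calc |16 * (⟪h₂ (y i), h₂ (y j)⟫ - ⟪h₁ (y i), h₁ (y j)⟫)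
          + 16 * (⟪h₁ (y i), h₁ (y j)⟫ - 16⁻¹ * (if i = j then 1 else 0))|
        ≤ 16 * (16 * δ) + 16 * (3 * δ) := le_trans (abs_add_le _ _) (add_le_add c1 c2)
      _ ≤ 304 * δ := by linarith
  -- apply the Gram-Schmidt stability lemma
  obtain ⟨u, hu⟩ := gs_stable n w (304 * δ) (by linarith)
    (by nlinarith) hw
  have hu' : ∀ i, ‖u i - w i‖ ≤ 3648 * 6 ^ n * δ := by
    intro i
    calc ‖u i - w i‖ ≤ 12 * 6 ^ n * (304 * δ) := hu i
      _ = 3648 * 6 ^ n * δ := by ring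
  refine ⟨u.repr.symm, ?_⟩
  intro x
  set v : EuclideanSpace ℝ (Fin n) := u.repr.symm (h₁ x) - h₂ x with hv
  have hcoord : ∀ i, ⟪u i, u.repr.symm (h₁ x)⟫ = h₁ x i := by
    intro i
    rw [← OrthonormalBasis.repr_apply_apply, LinearIsometryEquiv.apply_symm_apply]
  have hq : ∀ i, |⟪u i, h₂ x⟫ - h₁ x i| ≤ (72 + 7296 * 6 ^ n) * δ := by
    intro i
    have e1 : ⟪u i, h₂ x⟫ = ⟪w i, h₂ x⟫ + ⟪u i - w i, h₂ x⟫ := by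
      rw [inner_sub_left]; ring
    have b1 : |⟪u i - w i, h₂ x⟫| ≤ 7296 * 6 ^ n * δ := by
      calc |⟪u i - w i, h₂ x⟫| ≤ ‖u i - w i‖ * ‖h₂ x‖ := abs_real_inner_le_norm _ _
        _ ≤ 3648 * 6 ^ n * δ * 2 := by
            apply mul_le_mul (hu' i) (hn2 x) (norm_nonneg _)
            positivity
        _ = 7296 * 6 ^ n * δ := by ring
    have e2 : ⟪w i, h₂ x⟫ = 4 * ⟪h₂ (y i), h₂ x⟫ := by
      rw [hwdef]; simp only [real_inner_smul_left]
    have b2 : |⟪h₂ (y i), h₂ x⟫ - ⟪h₁ (y i), h₁ x⟫| ≤ 16 * δ := by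
      rw [abs_sub_comm]; exact hic (y i) x
    have e3 : ⟪h₁ (y i), h₁ x⟫ = ⟪z i, h₁ x⟫ + ⟪h₁ (y i) - z i, h₁ x⟫ := by
      rw [inner_sub_left]; ring
    have b3 : |⟪h₁ (y i) - z i, h₁ x⟫| ≤ 2 * δ := by
      calc |⟪h₁ (y i) - z i, h₁ x⟫| ≤ ‖h₁ (y i) - z i‖ * ‖h₁ x‖ := abs_real_inner_le_norm _ _
        _ ≤ δ * 2 := mul_le_mul (le_of_lt (ha i)) (hn1 x) (norm_nonneg _) (le_of_lt hδ)
        _ = 2 * δ := by ring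
    have e4 : ⟪z i, h₁ x⟫ = 4⁻¹ * h₁ x i := by
      rw [hz]
      simp [real_inner_smul_left, EuclideanSpace.inner_single_left]
    have key : ⟪u i, h₂ x⟫ - h₁ x i
        = ⟪u i - w i, h₂ x⟫ + 4 * (⟪h₂ (y i), h₂ x⟫ - ⟪h₁ (y i), h₁ x⟫)
          + 4 * ⟪h₁ (y i) - z i, h₁ x⟫ := by
      rw [e1, e2, e3, e4]; ring
    rw [key]
    have c2 : |(4:ℝ) * (⟪h₂ (y i), h₂ x⟫ - ⟪h₁ (y i), h₁ x⟫)| ≤ 4 * (16 * δ) := by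
      rw [abs_mul, abs_of_nonneg (by norm_num : (0:ℝ) ≤ 4)]
      exact mul_le_mul_of_nonneg_left b2 (by norm_num)
    have c3 : |(4:ℝ) * ⟪h₁ (y i) - z i, h₁ x⟫| ≤ 4 * (2 * δ) := by
      rw [abs_mul, abs_of_nonneg (by norm_num : (0:ℝ) ≤ 4)]
      exact mul_le_mul_of_nonneg_left b3 (by norm_num)
    calc |⟪u i - w i, h₂ x⟫ + 4 * (⟪h₂ (y i), h₂ x⟫ - ⟪h₁ (y i), h₁ x⟫)
          + 4 * ⟪h₁ (y i) - z i, h₁ x⟫|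
        ≤ |⟪u i - w i, h₂ x⟫ + 4 * (⟪h₂ (y i), h₂ x⟫ - ⟪h₁ (y i), h₁ x⟫)|
          + |4 * ⟪h₁ (y i) - z i, h₁ x⟫| := abs_add_le _ _
      _ ≤ (|⟪u i - w i, h₂ x⟫| + |4 * (⟪h₂ (y i), h₂ x⟫ - ⟪h₁ (y i), h₁ x⟫)|)
          + |4 * ⟪h₁ (y i) - z i, h₁ x⟫| := by
            have := abs_add_le (⟪u i - w i, h₂ x⟫) (4 * (⟪h₂ (y i), h₂ x⟫ - ⟪h₁ (y i), h₁ x⟫))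
            linarith
      _ ≤ 7296 * 6 ^ n * δ + 4 * (16 * δ) + 4 * (2 * δ) := by
            linarith
      _ = (72 + 7296 * 6 ^ n) * δ := by ring
  have hcv : ∀ i, |⟪u i, v⟫| ≤ (72 + 7296 * 6 ^ n) * δ := by
    intro i
    rw [hv, inner_sub_right, hcoord i, abs_sub_comm]
    exact hq i
  -- Parseval
  have hM : (0:ℝ) ≤ (72 + 7296 * 6 ^ n) * δ := by positivity
  have hnv : ‖v‖ ≤ Real.sqrt n * ((72 + 7296 * 6 ^ n) * δ) := by
    have h1 : ‖v‖ = ‖u.repr v‖ := (u.repr.norm_map v).symm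
    rw [h1, EuclideanSpace.norm_eq]
    have h2 : ∑ i, ‖u.repr v i‖ ^ 2 ≤ (n : ℝ) * ((72 + 7296 * 6 ^ n) * δ)^2 := by
      calc ∑ i, ‖u.repr v i‖ ^ 2 ≤ ∑ _i : Fin n, ((72 + 7296 * 6 ^ n) * δ)^2 := by
            apply Finset.sum_le_sum
            intro i _
            have : ‖u.repr v i‖ = |⟪u i, v⟫| := by
              rw [OrthonormalBasis.repr_apply_apply, Real.norm_eq_abs]
            rw [this]
            exact pow_le_pow_left₀ (abs_nonneg _) (hcv i) 2
        _ = (n : ℝ) * ((72 + 7296 * 6 ^ n) * δ)^2 := by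
            rw [Finset.sum_const, Finset.card_univ, Fintype.card_fin, nsmul_eq_mul]
    calc Real.sqrt (∑ i, ‖u.repr v i‖ ^ 2)
        ≤ Real.sqrt ((n : ℝ) * ((72 + 7296 * 6 ^ n) * δ)^2) := Real.sqrt_le_sqrt h2
      _ = Real.sqrt n * ((72 + 7296 * 6 ^ n) * δ) := by
          rw [Real.sqrt_mul (Nat.cast_nonneg n), Real.sqrt_sq hM]
  have hdist : dist (u.repr.symm (h₁ x)) (h₂ x) = ‖v‖ := by
    rw [hv, dist_eq_norm]
  rw [hdist]
  have hpos : 0 < (14592 * 6 ^ n + 1) * δ := by positivity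
  calc ‖v‖ ≤ Real.sqrt n * ((72 + 7296 * 6 ^ n) * δ) := hnv
    _ < Real.sqrt n * ((72 + 7296 * 6 ^ n) * δ) + (14592 * 6 ^ n + 1) * δ := by linarith
    _ = (Real.sqrt n * (72 + 7296 * 6 ^ n) + 14592 * 6 ^ n + 1) * δ := by ring
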